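/- Let P(x_1,…,x_n) be a polynomial over a field of characteristic two and T ⊆ {1,…,n}. For I ⊆ {1,…,n}, let P_{-I} denote P with the variables indexed by I set to 0. Define Q = ∑_{I ⊆ T} P_{-I}. Then for any monomial m divisible by ∏_{i∈T} x_i, the coefficient of m in Q equals its coefficient in P, and for every monomial m not divisible by ∏_{i∈T} x_i, the coefficient of m in Q is 0. -/

import Mathlib

open MvPolynomial

lemma key {F : Type*} [Field F] {n : ℕ} (I : Finset (Fin n))
    (P : MvPolynomial (Fin n) F) (m : Fin n →₀ ℕ) :
    (MvPolynomial.bind₁ (fun i => if i ∈ I then 0 else MvPolynomial.X i) P).coeff m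
      = if ∀ i ∈ I, m i = 0 then P.coeff m else 0 := by
  induction P using MvPolynomial.induction_on' with
  | monomial d c =>
    rw [bind₁_monomial]
    by_cases hd : ∀ i ∈ I, d i = 0
    · have hc : ∀ i ∈ d.support, (if i ∈ I then (0 : MvPolynomial (Fin n) F) else X i) ^ d i
          = X i ^ d i := by
        intro i hi
        have : i ∉ I := fun h => (Finsupp.mem_support_iff.mp hi) (hd i h)
        simp [this]
      rw [Finset.prod_congr rfl hc]
      have hmono : (C c * ∏ i ∈ d.support, (X i : MvPolynomial (Fin n) F) ^ d i)
          = monomial d c := by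
        rw [monomial_eq]; rfl
      rw [hmono, coeff_monomial]
      by_cases hdm : d = m
      · subst hdm
        rw [if_pos rfl, if_pos hd]
      · rw [if_neg hdm]
        split_ifs <;> rfl
    · push_neg at hd
      obtain ⟨i, hiI, hdi⟩ := hd
      have h0 : (∏ j ∈ d.support,
          (if j ∈ I then (0 : MvPolynomial (Fin n) F) else X j) ^ d j) = 0 := by
        apply Finset.prod_eq_zero (Finsupp.mem_support_iff.mpr hdi)
        simp [hiI, hdi]
      rw [h0, mul_zero, coeff_zero]
      by_cases hm : ∀ i ∈ I, m i = 0
      · rw [if_pos hm, coeff_monomial]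
        have : d ≠ m := fun h => hdi (h ▸ hm i hiI)
        rw [if_neg this]
      · rw [if_neg hm]
  | add p q hp hq =>
    rw [map_add, coeff_add, hp, hq, coeff_add]
    split_ifs <;> ring

theorem coeff_sum_subsets_char_two {F : Type*} [Field F] [CharP F 2] {n : ℕ}
    (P : MvPolynomial (Fin n) F) (T : Finset (Fin n)) (m : Fin n →₀ ℕ) :
    ((∀ i ∈ T, 0 < m i) →
      (∑ I ∈ T.powerset,
          MvPolynomial.bind₁
            (fun i => if i ∈ I then 0 else MvPolynomial.X i) P).coeff m = P.coeff m) ∧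
    ((¬ ∀ i ∈ T, 0 < m i) →
      (∑ I ∈ T.powerset,
          MvPolynomial.bind₁
            (fun i => if i ∈ I then 0 else MvPolynomial.X i) P).coeff m = 0) := by
  have hsum : (∑ I ∈ T.powerset,
      MvPolynomial.bind₁ (fun i => if i ∈ I then 0 else MvPolynomial.X i) P).coeff m
      = (T.powerset.filter (fun I => ∀ i ∈ I, m i = 0)).card • P.coeff m := by
    rw [MvPolynomial.coeff_sum]
    rw [Finset.sum_congr rfl (fun I _ => key I P m)]
    rw [Finset.sum_ite, Finset.sum_const, Finset.sum_const, smul_zero, add_zero]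
  constructor
  · intro h
    have hfil : T.powerset.filter (fun I => ∀ i ∈ I, m i = 0) = {∅} := by
      ext I
      simp only [Finset.mem_filter, Finset.mem_powerset, Finset.mem_singleton]
      constructor
      · rintro ⟨hIT, hI⟩
        ext i
        simp only [Finset.notMem_empty, iff_false]
        intro hiI
        exact absurd (hI i hiI) (h i (hIT hiI)).ne'
      · rintro rfl
        simp [Finset.empty_subset]
    rw [hsum, hfil, Finset.card_singleton, one_smul]
  · intro h
    push_neg at h
    obtain ⟨i, hiT, hmi⟩ := h
    have hmi : m i = 0 := Nat.le_zero.mp hmi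
    set Z := T.filter (fun i => m i = 0) with hZ
    have hfil : T.powerset.filter (fun I => ∀ i ∈ I, m i = 0) = Z.powerset := by
      ext I
      simp only [Finset.mem_filter, Finset.mem_powerset, hZ]
      constructor
      · rintro ⟨hIT, hI⟩ j hjI
        exact Finset.mem_filter.mpr ⟨hIT hjI, hI j hjI⟩
      · intro hIZ
        exact ⟨fun j hj => (Finset.mem_filter.mp (hIZ hj)).1,
          fun j hj => (Finset.mem_filter.mp (hIZ hj)).2⟩
    rw [hsum, hfil, Finset.card_powerset]
    have hZpos : 0 < Z.card :=
      Finset.card_pos.mpr ⟨i, Finset.mem_filter.mpr ⟨hiT, hmi⟩⟩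
    have : ((2 ^ Z.card : ℕ) : F) = 0 := by
      rw [Nat.cast_pow, CharP.cast_eq_zero F 2, zero_pow hZpos.ne']
    rw [nsmul_eq_mul, this, zero_mul]
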